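/- arXiv:1206.5030 — 4 statements merged into one kernel-verified Lean document; each statement's English description precedes it below -/
import Mathlib

section
/- Let f : ℕ → ℕ satisfy f(m·n) = f(m)·f(n) for all positive integers m, n, and suppose f is strictly increasing on the positive integers (1 ≤ m < n implies f(m) < f(n)). Then there exists a natural number r such that f(n) = n^r for all positive integers n. -/
open Real Finset

/-- Forward difference operator on real functions. -/
noncomputable def whΔ (h : ℝ → ℝ) : ℝ → ℝ := fun x => h (x + 1) - h x

/-- Forward difference operator on integer sequences. -/
def whΔZ (a : ℕ → ℤ) : ℕ → ℤ := fun n => a (n + 1) - a n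

lemma whΔ_hasDerivAt {h h' : ℝ → ℝ} (H : ∀ x > (0:ℝ), HasDerivAt h (h' x) x)
    {x : ℝ} (hx : 0 < x) : HasDerivAt (whΔ h) (whΔ h' x) x := by
  have h1 : HasDerivAt (fun y : ℝ => h (y + 1)) (h' (x + 1)) x :=
    HasDerivAt.comp_add_const x 1 (H (x + 1) (by linarith))
  exact h1.sub (H x hx)

/-- Iterated mean value theorem for finite differences. -/
lemma wh_iter_mvt (m : ℕ) : ∀ (h : ℕ → ℝ → ℝ),
    (∀ k, ∀ x > (0:ℝ), HasDerivAt (h k) (h (k + 1) x) x) →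
    ∀ x > (0:ℝ), ∃ ξ, x ≤ ξ ∧ ξ ≤ x + m ∧ whΔ^[m] (h 0) x = h m ξ := by
  induction m with
  | zero => intro h _ x hx; exact ⟨x, le_rfl, by simp, by simp⟩
  | succ m ih =>
    intro h H x hx
    obtain ⟨ξ, hξ1, hξ2, hξ3⟩ := ih (fun k => whΔ (h k))
      (fun k x hx => whΔ_hasDerivAt (H k) hx) x hx
    have hξpos : 0 < ξ := lt_of_lt_of_le hx hξ1
    obtain ⟨η, hη, hη2⟩ := exists_hasDerivAt_eq_slope (h m) (h (m + 1))
      (by linarith : ξ < ξ + 1)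
      (fun y hy => (H m y (by rcases hy with ⟨hy1, _⟩; linarith)).continuousAt.continuousWithinAt)
      (fun y hy => H m y (by rcases hy with ⟨hy1, _⟩; linarith))
    refine ⟨η, ?_, ?_, ?_⟩
    · rcases hη with ⟨hη1, _⟩; linarith
    · rcases hη with ⟨_, hη2'⟩; push_cast; linarith
    · rw [Function.iterate_succ_apply]
      have : whΔ^[m] (whΔ (h 0)) x = whΔ (h m) ξ := hξ3
      rw [this, whΔ]
      rw [hη2]; ring

/-- The derivative chain for `x ^ c`. -/
noncomputable def whP (c : ℝ) (k : ℕ) : ℝ → ℝ :=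
  fun x => (∏ i ∈ Finset.range k, (c - i)) * x ^ (c - k)

lemma whP_deriv (c : ℝ) (k : ℕ) : ∀ x > (0:ℝ), HasDerivAt (whP c k) (whP c (k + 1) x) x := by
  intro x hx
  have h1 : HasDerivAt (fun x : ℝ => x ^ (c - k)) ((c - k) * x ^ (c - k - 1)) x :=
    Real.hasDerivAt_rpow_const (Or.inl hx.ne')
  have h2 := h1.const_mul (∏ i ∈ Finset.range k, (c - i))
  refine h2.congr_deriv ?_
  symm
  rw [whP, Finset.prod_range_succ]
  push_cast
  rw [show c - (↑k + 1) = c - ↑k - 1 by ring]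
  ring

lemma wh_delta_int (g : ℝ → ℝ) (a : ℕ → ℤ) (hag : ∀ n : ℕ, 1 ≤ n → g n = a n) :
    ∀ (m : ℕ) (n : ℕ), 1 ≤ n → whΔ^[m] g (n : ℝ) = ((whΔZ^[m] a) n : ℤ) := by
  intro m
  induction m with
  | zero => simpa using hag
  | succ m ih =>
    intro n hn
    rw [Function.iterate_succ_apply', Function.iterate_succ_apply']
    have h1 := ih (n + 1) (by omega)
    have h2 := ih n hn
    simp only [whΔ, whΔZ]
    push_cast
    rw [← h1, ← h2]
    push_cast
    ring

lemma wh_f1 (f : ℕ → ℕ)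
    (hmul : ∀ m n : ℕ, 0 < m → 0 < n → f (m * n) = f m * f n)
    (hmono : ∀ m n : ℕ, 1 ≤ m → m < n → f m < f n) : f 1 = 1 := by
  have h1 : f 1 = f 1 * f 1 := by simpa using hmul 1 1 one_pos one_pos
  have h2 : f 1 < f 2 := hmono 1 2 le_rfl one_lt_two
  have h3 : f 2 = f 2 * f 1 := by simpa using hmul 2 1 two_pos one_pos
  rcases Nat.eq_zero_or_pos (f 1) with h | h
  · rw [h, Nat.mul_zero] at h3; omega
  · by_contra hne
    have hgt : 1 < f 1 := by omega
    have : f 1 < f 1 * f 1 := (Nat.lt_mul_iff_one_lt_right h).mpr hgt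
    omega

lemma wh_fpow (f : ℕ → ℕ)
    (hmul : ∀ m n : ℕ, 0 < m → 0 < n → f (m * n) = f m * f n)
    (hmono : ∀ m n : ℕ, 1 ≤ m → m < n → f m < f n) :
    ∀ m : ℕ, 1 ≤ m → ∀ x : ℕ, f (m ^ x) = f m ^ x := by
  intro m hm x
  induction x with
  | zero => simpa using wh_f1 f hmul hmono
  | succ x ih =>
    rw [pow_succ, hmul _ _ (Nat.pow_pos (n := x) (by omega)) (by omega), ih, pow_succ]

lemma wh_fge2 (f : ℕ → ℕ)
    (hmul : ∀ m n : ℕ, 0 < m → 0 < n → f (m * n) = f m * f n)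
    (hmono : ∀ m n : ℕ, 1 ≤ m → m < n → f m < f n) :
    ∀ m : ℕ, 2 ≤ m → 2 ≤ f m := by
  intro m hm
  have := hmono 1 m le_rfl (by omega)
  rw [wh_f1 f hmul hmono] at this
  omega

lemma wh_cross (f : ℕ → ℕ)
    (hmul : ∀ m n : ℕ, 0 < m → 0 < n → f (m * n) = f m * f n)
    (hmono : ∀ m n : ℕ, 1 ≤ m → m < n → f m < f n) :
    ∀ m k : ℕ, 2 ≤ m → 2 ≤ k →
      Real.log m * Real.log (f k) ≤ Real.log k * Real.log (f m) := by
  intro m k hm hk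
  by_contra hcon
  push_neg at hcon
  have lm : (0:ℝ) < Real.log m := Real.log_pos (by exact_mod_cast hm)
  have lk : (0:ℝ) < Real.log k := Real.log_pos (by exact_mod_cast hk)
  have lfm : (0:ℝ) < Real.log (f m) :=
    Real.log_pos (by exact_mod_cast wh_fge2 f hmul hmono m hm)
  have lfk : (0:ℝ) < Real.log (f k) :=
    Real.log_pos (by exact_mod_cast wh_fge2 f hmul hmono k hk)
  have hdiv : Real.log (f m) / Real.log (f k) < Real.log m / Real.log k := by
    rw [div_lt_div_iff₀ lfk lk]; nlinarith [hcon]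
  obtain ⟨q, hq1, hq2⟩ := exists_rat_btwn hdiv
  have hq0 : (0:ℝ) < (q:ℝ) := lt_trans (div_pos lfm lfk) hq1
  have hqnum : 0 < q.num := by
    rw [Rat.num_pos]; exact_mod_cast hq0
  set x := q.den with hxdef
  set y := q.num.toNat with hydef
  have hx : 0 < x := q.pos
  have hy : 0 < y := by omega
  have hqxy : (q:ℝ) = (y:ℝ) / (x:ℝ) := by
    rw [Rat.cast_def]
    congr 1
    rw [hydef]
    exact_mod_cast (Int.toNat_of_nonneg hqnum.le).symm
  -- from q < log m / log k : k ^ y < m ^ x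
  have h1 : (y:ℝ) * Real.log k < (x:ℝ) * Real.log m := by
    rw [hqxy, div_lt_div_iff₀ (by exact_mod_cast hx) lk] at hq2
    nlinarith [hq2]
  have h2 : Real.log ((k:ℝ) ^ y) < Real.log ((m:ℝ) ^ x) := by
    rw [Real.log_pow, Real.log_pow]; exact_mod_cast h1
  have h3 : (k:ℝ) ^ y < (m:ℝ) ^ x := by
    have hkp : (0:ℝ) < (k:ℝ) ^ y := pow_pos (by exact_mod_cast (by omega : 0 < k)) y
    have hmp : (0:ℝ) < (m:ℝ) ^ x := pow_pos (by exact_mod_cast (by omega : 0 < m)) x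
    rw [Real.log_lt_log_iff hkp hmp] at h2
    exact h2
  have h4 : k ^ y < m ^ x := by exact_mod_cast h3
  have h5 : f (k ^ y) < f (m ^ x) := hmono _ _ (Nat.one_le_pow _ _ (by omega)) h4
  rw [wh_fpow f hmul hmono k (by omega), wh_fpow f hmul hmono m (by omega)] at h5
  have h6 : ((f k : ℝ)) ^ y < ((f m : ℝ)) ^ x := by exact_mod_cast h5
  have h7 : (y:ℝ) * Real.log (f k) < (x:ℝ) * Real.log (f m) := by
    have hfkp : (0:ℝ) < ((f k : ℕ):ℝ) ^ y :=
      pow_pos (by exact_mod_cast (by have := wh_fge2 f hmul hmono k hk; omega : 0 < f k)) y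
    have := Real.log_lt_log hfkp h6
    rw [Real.log_pow, Real.log_pow] at this
    exact_mod_cast this
  have h8 : (q:ℝ) < Real.log (f m) / Real.log (f k) := by
    rw [hqxy, div_lt_div_iff₀ (by exact_mod_cast hx) lfk]
    nlinarith [h7]
  linarith

lemma wh_log_eq (f : ℕ → ℕ)
    (hmul : ∀ m n : ℕ, 0 < m → 0 < n → f (m * n) = f m * f n)
    (hmono : ∀ m n : ℕ, 1 ≤ m → m < n → f m < f n) :
    ∀ m : ℕ, 2 ≤ m →
      Real.log (f m) * Real.log 2 = Real.log m * Real.log (f 2) := by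
  intro m hm
  have h1 := wh_cross f hmul hmono m 2 hm le_rfl
  have h2 := wh_cross f hmul hmono 2 m le_rfl hm
  push_cast at h1 h2 ⊢
  nlinarith [h1, h2]

/-- The arithmetic core of the Wootters–Hardy parameter lemma: a multiplicative,
strictly increasing function on the positive integers is a power function. -/
theorem stmt0 (f : ℕ → ℕ)
    (hmul : ∀ m n : ℕ, 0 < m → 0 < n → f (m * n) = f m * f n)
    (hmono : ∀ m n : ℕ, 1 ≤ m → m < n → f m < f n) :
    ∃ r : ℕ, ∀ n : ℕ, 0 < n → f n = n ^ r := by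
  have hf2 : 2 ≤ f 2 := wh_fge2 f hmul hmono 2 le_rfl
  have hlog2 : (0:ℝ) < Real.log 2 := Real.log_pos one_lt_two
  set c : ℝ := Real.log (f 2) / Real.log 2 with hcdef
  have hc0 : 0 < c := div_pos (Real.log_pos (by exact_mod_cast hf2)) hlog2
  -- f n = n ^ c as reals
  have hrpow : ∀ n : ℕ, 1 ≤ n → (f n : ℝ) = (n:ℝ) ^ c := by
    intro n hn
    rcases eq_or_lt_of_le hn with h1 | h1
    · rw [← h1]
      simp [wh_f1 f hmul hmono, Real.one_rpow]
    · have hn2 : 2 ≤ n := h1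
      have hfn : 2 ≤ f n := wh_fge2 f hmul hmono n hn2
      have heq := wh_log_eq f hmul hmono n hn2
      have hlogfn : Real.log (f n) = c * Real.log n := by
        rw [hcdef]; field_simp; nlinarith [heq]
      have hnpos : (0:ℝ) < (n:ℝ) := by exact_mod_cast (by omega : 0 < n)
      have hfnpos : (0:ℝ) < (f n : ℝ) := by exact_mod_cast (by omega : 0 < f n)
      rw [Real.rpow_def_of_pos hnpos, ← Real.exp_log hfnpos, hlogfn, mul_comm]
  set r : ℕ := ⌈c⌉₊ with hrdef
  rcases eq_or_lt_of_le (Nat.le_ceil c) with hcr | hcr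
  · -- c is the natural number r
    refine ⟨r, fun n hn => ?_⟩
    have h := hrpow n hn
    rw [hcr, Real.rpow_natCast] at h
    exact_mod_cast h
  · -- c is strictly between r - 1 and r : contradiction
    exfalso
    have hrc : (r:ℝ) - 1 < c := by
      have := Nat.ceil_lt_add_one hc0.le
      rw [← hrdef] at this
      linarith
    set C : ℝ := ∏ i ∈ Finset.range r, (c - i) with hCdef
    have hC : 0 < C := by
      apply Finset.prod_pos
      intro i hi
      have hir : i + 1 ≤ r := Finset.mem_range.mp hi
      have : (i:ℝ) + 1 ≤ (r:ℝ) := by exact_mod_cast hir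
      linarith
    set e : ℝ := (r:ℝ) - c with hedef
    have he : 0 < e := by rw [hedef]; linarith
    set N : ℕ := ⌊C ^ e⁻¹⌋₊ + 1 with hNdef
    have hN1 : 1 ≤ N := by omega
    have hNpos : (0:ℝ) < (N:ℝ) := by exact_mod_cast (by omega : 0 < N)
    have hNB : C ^ e⁻¹ < (N:ℝ) := by
      rw [hNdef]; push_cast; exact Nat.lt_floor_add_one _
    have hNe : C < (N:ℝ) ^ e := by
      calc C = (C ^ e⁻¹) ^ e := (Real.rpow_inv_rpow hC.le he.ne').symm
        _ < (N:ℝ) ^ e := Real.rpow_lt_rpow (Real.rpow_nonneg hC.le _) hNB he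
    obtain ⟨ξ, hξ1, hξ2, hξ3⟩ := wh_iter_mvt r (whP c) (whP_deriv c) (N:ℝ) hNpos
    have hξpos : (0:ℝ) < ξ := lt_of_lt_of_le hNpos hξ1
    -- the value is C * ξ ^ (c - r)
    have hval : whΔ^[r] (whP c 0) (N:ℝ) = C * ξ ^ (c - (r:ℝ)) := by
      rw [hξ3, whP, hCdef]
    have hpos : 0 < whΔ^[r] (whP c 0) (N:ℝ) := by
      rw [hval]; exact mul_pos hC (Real.rpow_pos_of_pos hξpos _)
    have hlt1 : whΔ^[r] (whP c 0) (N:ℝ) < 1 := by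
      rw [hval]
      have hle : ξ ^ (c - (r:ℝ)) ≤ (N:ℝ) ^ (c - (r:ℝ)) :=
        Real.rpow_le_rpow_of_nonpos hNpos hξ1 (by linarith)
      have hNcr : (N:ℝ) ^ (c - (r:ℝ)) = ((N:ℝ) ^ e)⁻¹ := by
        rw [show c - (r:ℝ) = -e by rw [hedef]; ring, Real.rpow_neg hNpos.le]
      have hNepos : (0:ℝ) < (N:ℝ) ^ e := Real.rpow_pos_of_pos hNpos _
      calc C * ξ ^ (c - (r:ℝ)) ≤ C * ((N:ℝ) ^ e)⁻¹ := by
            rw [← hNcr]; exact mul_le_mul_of_nonneg_left hle hC.le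
        _ < 1 := by rw [← div_eq_mul_inv, div_lt_one hNepos]; exact hNe
    -- but it is an integer
    have hg : ∀ n : ℕ, 1 ≤ n → whP c 0 (n:ℝ) = ((fun n : ℕ => (f n : ℤ)) n : ℤ) := by
      intro n hn
      simp only [whP, Finset.range_zero, Finset.prod_empty, one_mul, Nat.cast_zero, sub_zero]
      rw [← hrpow n hn]
      push_cast
      rfl
    have hint := wh_delta_int (whP c 0) (fun n : ℕ => (f n : ℤ)) hg r N hN1
    set z : ℤ := (whΔZ^[r] (fun n : ℕ => (f n : ℤ))) N with hzdef
    rw [hint] at hpos hlt1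
    have hz0 : 0 < z := by exact_mod_cast hpos
    have hz1 : (1:ℝ) ≤ (z:ℝ) := by exact_mod_cast hz0
    linarith
end

section
/- Let G be a compact topological group equipped with its Haar probability measure, let n ≥ 1, and let ρ : G → O(n+1, ℝ) be a continuous group homomorphism fixing the first standard basis vector e₀ (ρ(g)e₀ = e₀ for all g), such that (i) every linear map of W := e₀^⊥ to itself commuting with all restrictions ρ(g)|_W is a real scalar multiple of the identity of W, and (ii) the only vectors of ℝ^{n+1} fixed by all ρ(g) are the multiples of e₀. Let k ≥ 1, let Q = I − e₀e₀ᵀ, and for a square matrix M indexed by the product type (Fin k) × (Fin (n+1)) let Tr₂ M denote the partial trace over the second factor, i.e. the k×k matrix (Tr₂ M)_{i,i'} = Σ_j M_{(i,j),(i',j)}. Then for every vector ψ ∈ ℝᵏ ⊗ ℝ^{n+1}: ∫_G (I_k ⊗ ρ(g)) ψψᵀ (I_k ⊗ ρ(g))ᵀ dg = Tr₂[(I_k ⊗ Q) ψψᵀ (I_k ⊗ Q)] ⊗ (Q/n) + Tr₂[(I_k ⊗ e₀e₀ᵀ) ψψᵀ (I_k ⊗ e₀e₀ᵀ)] ⊗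 e₀e₀ᵀ. -/
open MeasureTheory Matrix Kronecker

attribute [local instance] Matrix.normedAddCommGroup Matrix.normedSpace

set_option linter.unusedSectionVars false
set_option maxHeartbeats 1000000

namespace Stmt6Aux
variable {m p : Type*} [Fintype m] [Fintype p] [DecidableEq m] [DecidableEq p]

lemma mul_vecMulVec (A : Matrix m m ℝ) (a b : m → ℝ) :
    A * vecMulVec a b = vecMulVec (A *ᵥ a) b := by
  ext i j
  simp [mul_apply, vecMulVec_apply, mulVec, dotProduct, Finset.sum_mul, mul_assoc]

lemma vecMulVec_mul (A : Matrix m m ℝ) (a b : m → ℝ) :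
    vecMulVec a b * A = vecMulVec a (Aᵀ *ᵥ b) := by
  ext i j
  simp [mul_apply, vecMulVec_apply, mulVec, dotProduct, Finset.mul_sum, mul_comm, mul_assoc,
    mul_left_comm]

lemma vecMulVec_mul_vecMulVec (a b c d : m → ℝ) :
    vecMulVec a b * vecMulVec c d = (b ⬝ᵥ c) • vecMulVec a d := by
  ext i j
  simp only [mul_apply, vecMulVec_apply, Matrix.smul_apply, smul_eq_mul, dotProduct, Finset.sum_mul]
  exact Finset.sum_congr rfl fun x _ => by ring

lemma trace_vecMulVec (a b : m → ℝ) : trace (vecMulVec a b) = a ⬝ᵥ b := by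
  simp [trace, diag, vecMulVec_apply, dotProduct]

lemma transpose_vecMulVec (a b : m → ℝ) : (vecMulVec a b)ᵀ = vecMulVec b a := by
  ext i j; simp [vecMulVec_apply, mul_comm]

lemma vecMulVec_mulVec (a b v : m → ℝ) : vecMulVec a b *ᵥ v = (b ⬝ᵥ v) • a := by
  ext i; simp [mulVec, vecMulVec_apply, dotProduct, Finset.mul_sum, smul_eq_mul, mul_comm,
    mul_assoc]
  exact Finset.sum_congr rfl fun x _ => by ring

/-- entry evaluation as a continuous linear map -/
noncomputable instance instCENormMatrix : ContinuousENorm (Matrix m p ℝ) :=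
  SeminormedAddGroup.toContinuousENorm

noncomputable def entryCLM (i : m) (j : p) : Matrix m p ℝ →L[ℝ] ℝ :=
  LinearMap.toContinuousLinearMap
    ((LinearMap.proj j).comp ((LinearMap.proj i).comp
      (LinearMap.id : Matrix m p ℝ →ₗ[ℝ] (m → p → ℝ))))

@[simp] lemma entryCLM_apply (i : m) (j : p) (M : Matrix m p ℝ) : entryCLM i j M = M i j := rfl

lemma integral_matrix_apply {α : Type*} [MeasurableSpace α] {μ : Measure α}
    {F : α → Matrix m p ℝ} (hF : Integrable F μ) (i : m) (j : p) :
    (∫ x, F x ∂μ) i j = ∫ x, F x i j ∂μ := by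
  have := (ContinuousLinearMap.integral_comp_comm (entryCLM (p := p) i j) hF).symm
  exact this

/-- two-sided multiplication as a continuous linear map -/
noncomputable def conjCLM (M M' : Matrix m m ℝ) : Matrix m m ℝ →L[ℝ] Matrix m m ℝ :=
  LinearMap.toContinuousLinearMap
    ((LinearMap.mulRight ℝ M').comp (LinearMap.mulLeft ℝ M))

@[simp] lemma conjCLM_apply (M M' A : Matrix m m ℝ) : conjCLM M M' A = M * A * M' := rfl

/-- trace as a continuous linear map -/
noncomputable def traceCLM : Matrix m m ℝ →L[ℝ] ℝ :=
  LinearMap.toContinuousLinearMap (traceLinearMap m ℝ ℝ)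

@[simp] lemma traceCLM_apply (A : Matrix m m ℝ) : traceCLM A = trace A := rfl

lemma integrable_of_continuous {G : Type*} [TopologicalSpace G] [CompactSpace G]
    [MeasurableSpace G] [BorelSpace G] (μ : Measure G) [IsFiniteMeasure μ]
    {E : Type*} [NormedAddCommGroup E] [NormedSpace ℝ E]
    {f : G → E} (hf : Continuous f) : Integrable f μ :=
  hf.integrable_of_hasCompactSupport
    (by rw [hasCompactSupport_def]; exact (isClosed_tsupport _).isCompact)

/-- The key averaging lemma. -/
lemma conj_avg {G : Type*} [Group G] [TopologicalSpace G] [IsTopologicalGroup G]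
    [CompactSpace G] [MeasurableSpace G] [BorelSpace G]
    (μ : Measure G) [μ.IsHaarMeasure] [IsProbabilityMeasure μ]
    (ρ : G →* Matrix.orthogonalGroup m ℝ)
    (hρ : Continuous fun g => (ρ g : Matrix m m ℝ))
    (e₀ : m → ℝ) (he : e₀ ⬝ᵥ e₀ = 1)
    (hfix : ∀ g : G, (ρ g : Matrix m m ℝ) *ᵥ e₀ = e₀)
    (Q : Matrix m m ℝ) (hQ : Q = 1 - vecMulVec e₀ e₀) (htQ : trace Q ≠ 0)
    (hW : ∀ A : Matrix m m ℝ, A = Q * A * Q →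
      (∀ g : G, A * (ρ g : Matrix m m ℝ) = (ρ g : Matrix m m ℝ) * A) →
      ∃ c : ℝ, A = c • Q)
    (hinv : ∀ x : m → ℝ,
      (∀ g : G, (ρ g : Matrix m m ℝ) *ᵥ x = x) → ∃ c : ℝ, x = c • e₀)
    (A : Matrix m m ℝ) :
    ∫ g, (ρ g : Matrix m m ℝ) * A * (ρ g : Matrix m m ℝ)ᵀ ∂μ
      = ((trace Q)⁻¹ * trace (Q * A * Q)) • Q
        + vecMulVec e₀ e₀ * A * vecMulVec e₀ e₀ := by
  set P : Matrix m m ℝ := vecMulVec e₀ e₀ with hP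
  -- basic algebra
  have hPP : P * P = P := by rw [hP, vecMulVec_mul_vecMulVec, he, one_smul]
  have hPt : Pᵀ = P := transpose_vecMulVec e₀ e₀
  have hQt : Qᵀ = Q := by rw [hQ, transpose_sub, transpose_one, hPt]
  have hQQ : Q * Q = Q := by
    rw [hQ]; simp [sub_mul, mul_sub, hPP]
  have hPQ : P * Q = 0 := by rw [hQ]; simp [mul_sub, hPP]
  have hQP : Q * P = 0 := by rw [hQ]; simp [sub_mul, hPP]
  have hPQ1 : P + Q = 1 := by rw [hQ]; abel
  -- coercion facts
  have hRmul : ∀ h g : G, (ρ (h * g) : Matrix m m ℝ)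
      = (ρ h : Matrix m m ℝ) * (ρ g : Matrix m m ℝ) := by
    intro h g; rw [_root_.map_mul]; rfl
  have hRone : (ρ 1 : Matrix m m ℝ) = 1 := by rw [_root_.map_one]; rfl
  have hO : ∀ g : G, ((ρ g : Matrix m m ℝ))ᵀ * (ρ g : Matrix m m ℝ) = 1 := by
    intro g
    have h1 := (ρ g).prop.1
    rwa [star_eq_conjTranspose, conjTranspose_eq_transpose_of_trivial] at h1
  have hO' : ∀ g : G, (ρ g : Matrix m m ℝ) * ((ρ g : Matrix m m ℝ))ᵀ = 1 := by
    intro g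
    have h1 := (ρ g).prop.2
    rwa [star_eq_conjTranspose, conjTranspose_eq_transpose_of_trivial] at h1
  have hRt : ∀ g : G, ((ρ g : Matrix m m ℝ))ᵀ = (ρ g⁻¹ : Matrix m m ℝ) := by
    intro g
    calc ((ρ g : Matrix m m ℝ))ᵀ
        = ((ρ g : Matrix m m ℝ))ᵀ * ((ρ g : Matrix m m ℝ) * (ρ g⁻¹ : Matrix m m ℝ)) := by
          rw [← hRmul, mul_inv_cancel, hRone, mul_one]
      _ = (((ρ g : Matrix m m ℝ))ᵀ * (ρ g : Matrix m m ℝ)) * (ρ g⁻¹ : Matrix m m ℝ) := by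
          rw [mul_assoc]
      _ = (ρ g⁻¹ : Matrix m m ℝ) := by rw [hO, one_mul]
  have hfixT : ∀ g : G, ((ρ g : Matrix m m ℝ))ᵀ *ᵥ e₀ = e₀ := by
    intro g; rw [hRt]; exact hfix g⁻¹
  have hRP : ∀ g : G, (ρ g : Matrix m m ℝ) * P = P := by
    intro g; rw [hP, mul_vecMulVec, hfix]
  have hPR : ∀ g : G, P * (ρ g : Matrix m m ℝ) = P := by
    intro g; rw [hP, vecMulVec_mul, hfixT]
  have hRQ : ∀ g : G, (ρ g : Matrix m m ℝ) * Q = Q * (ρ g : Matrix m m ℝ) := by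
    intro g; rw [hQ]; simp [mul_sub, sub_mul, hRP, hPR]
  have hRtQ : ∀ g : G, ((ρ g : Matrix m m ℝ))ᵀ * Q = Q * ((ρ g : Matrix m m ℝ))ᵀ := by
    intro g; rw [hRt]; exact hRQ g⁻¹
  -- integrability
  have hFc : Continuous fun g : G => (ρ g : Matrix m m ℝ) * A * ((ρ g : Matrix m m ℝ))ᵀ :=
    (hρ.matrix_mul continuous_const).matrix_mul hρ.matrix_transpose
  have hFi : Integrable (fun g : G => (ρ g : Matrix m m ℝ) * A * ((ρ g : Matrix m m ℝ))ᵀ) μ :=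
    integrable_of_continuous μ hFc
  set C : Matrix m m ℝ := ∫ g, (ρ g : Matrix m m ℝ) * A * ((ρ g : Matrix m m ℝ))ᵀ ∂μ with hC
  -- invariance
  have hconj : ∀ (M M' : Matrix m m ℝ),
      M * C * M' = ∫ g, M * ((ρ g : Matrix m m ℝ) * A * ((ρ g : Matrix m m ℝ))ᵀ) * M' ∂μ := by
    intro M M'
    have := ContinuousLinearMap.integral_comp_comm (conjCLM M M') hFi
    change ∫ g, M * ((ρ g : Matrix m m ℝ) * A * ((ρ g : Matrix m m ℝ))ᵀ) * M' ∂μ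
      = M * (∫ g, (ρ g : Matrix m m ℝ) * A * ((ρ g : Matrix m m ℝ))ᵀ ∂μ) * M' at this
    rw [hC, ← this]
  have hinvar : ∀ h : G, (ρ h : Matrix m m ℝ) * C * ((ρ h : Matrix m m ℝ))ᵀ = C := by
    intro h
    rw [hconj]
    have hcong : ∀ g : G,
        (ρ h : Matrix m m ℝ) * ((ρ g : Matrix m m ℝ) * A * ((ρ g : Matrix m m ℝ))ᵀ)
          * ((ρ h : Matrix m m ℝ))ᵀ
        = (ρ (h * g) : Matrix m m ℝ) * A * ((ρ (h * g) : Matrix m m ℝ))ᵀ := by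
      intro g
      rw [hRmul, transpose_mul]
      noncomm_ring
    rw [integral_congr_ae (Filter.Eventually.of_forall hcong)]
    exact integral_mul_left_eq_self
      (fun g => (ρ g : Matrix m m ℝ) * A * ((ρ g : Matrix m m ℝ))ᵀ) h
  have hcomm : ∀ h : G, (ρ h : Matrix m m ℝ) * C = C * (ρ h : Matrix m m ℝ) := by
    intro h
    have := congrArg (· * (ρ h : Matrix m m ℝ)) (hinvar h)
    rw [mul_assoc, mul_assoc, hO, mul_one] at this
    exact this
  -- transpose also commutes
  have hcommT : ∀ h : G, (ρ h : Matrix m m ℝ) * Cᵀ = Cᵀ * (ρ h : Matrix m m ℝ) := by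
    intro h
    have h2 := congrArg Matrix.transpose (hcomm h⁻¹)
    rw [transpose_mul, transpose_mul, hRt, inv_inv] at h2
    exact h2.symm
  have hQv : Q *ᵥ e₀ = 0 := by
    rw [hQ, sub_mulVec, one_mulVec, vecMulVec_mulVec, he, one_smul, sub_self]
  -- cross terms vanish
  have cross : ∀ D : Matrix m m ℝ,
      (∀ h : G, (ρ h : Matrix m m ℝ) * D = D * (ρ h : Matrix m m ℝ)) →
      Q * (D * P) = 0 := by
    intro D hD
    rw [hP, mul_vecMulVec, mul_vecMulVec]
    set x : m → ℝ := Q *ᵥ (D *ᵥ e₀) with hx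
    have hxfix : ∀ g : G, (ρ g : Matrix m m ℝ) *ᵥ x = x := by
      intro g
      calc (ρ g : Matrix m m ℝ) *ᵥ x
          = (((ρ g : Matrix m m ℝ) * Q) * D) *ᵥ e₀ := by
            rw [hx, mulVec_mulVec, mulVec_mulVec]
        _ = ((Q * D) * (ρ g : Matrix m m ℝ)) *ᵥ e₀ := by
            rw [hRQ, mul_assoc, hD, ← mul_assoc]
        _ = (Q * D) *ᵥ ((ρ g : Matrix m m ℝ) *ᵥ e₀) := by rw [mulVec_mulVec]
        _ = x := by rw [hfix, hx, mulVec_mulVec]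
    obtain ⟨c', hc'⟩ := hinv x hxfix
    have hxq : Q *ᵥ x = x := by rw [hx, mulVec_mulVec, mulVec_mulVec, hQQ, mulVec_mulVec]
    have hx0 : x = 0 := by
      rw [← hxq, hc', mulVec_smul, hQv, smul_zero]
    rw [hx0]
    ext i j; simp [vecMulVec_apply]
  have hQCP : Q * (C * P) = 0 := cross C hcomm
  have hPCQ : P * (C * Q) = 0 := by
    have h3 := congrArg Matrix.transpose (cross Cᵀ hcommT)
    rw [transpose_mul, transpose_mul, transpose_transpose, hPt, hQt, transpose_zero] at h3
    rw [← mul_assoc]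
    exact h3
  -- the QCQ block is scalar
  obtain ⟨c, hc⟩ : ∃ c : ℝ, Q * C * Q = c • Q := by
    apply hW
    · rw [show Q * (Q * C * Q) * Q = (Q * Q) * C * (Q * Q) by noncomm_ring, hQQ]
    · intro g
      calc Q * C * Q * (ρ g : Matrix m m ℝ)
          = (Q * C) * (Q * (ρ g : Matrix m m ℝ)) := by rw [mul_assoc]
        _ = (Q * C) * ((ρ g : Matrix m m ℝ) * Q) := by rw [← hRQ]
        _ = Q * (C * (ρ g : Matrix m m ℝ)) * Q := by noncomm_ring
        _ = Q * ((ρ g : Matrix m m ℝ) * C) * Q := by rw [← hcomm]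
        _ = (Q * (ρ g : Matrix m m ℝ)) * (C * Q) := by noncomm_ring
        _ = ((ρ g : Matrix m m ℝ) * Q) * (C * Q) := by rw [← hRQ]
        _ = (ρ g : Matrix m m ℝ) * (Q * C * Q) := by noncomm_ring
  -- trace computation for the scalar
  have hQCQint : Q * C * Q
      = ∫ g, (ρ g : Matrix m m ℝ) * (Q * A * Q) * ((ρ g : Matrix m m ℝ))ᵀ ∂μ := by
    rw [hconj Q Q]
    refine integral_congr_ae (Filter.Eventually.of_forall fun g => ?_)
    calc Q * ((ρ g : Matrix m m ℝ) * A * ((ρ g : Matrix m m ℝ))ᵀ) * Q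
        = (Q * (ρ g : Matrix m m ℝ)) * A * (((ρ g : Matrix m m ℝ))ᵀ * Q) := by noncomm_ring
      _ = ((ρ g : Matrix m m ℝ) * Q) * A * (Q * ((ρ g : Matrix m m ℝ))ᵀ) := by
          rw [hRQ, hRtQ]
      _ = (ρ g : Matrix m m ℝ) * (Q * A * Q) * ((ρ g : Matrix m m ℝ))ᵀ := by noncomm_ring
  have htrace : trace (Q * C * Q) = trace (Q * A * Q) := by
    rw [hQCQint]
    have hint2 : Integrable
        (fun g : G => (ρ g : Matrix m m ℝ) * (Q * A * Q) * ((ρ g : Matrix m m ℝ))ᵀ) μ :=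
      integrable_of_continuous μ
        ((hρ.matrix_mul continuous_const).matrix_mul hρ.matrix_transpose)
    have h4 := (ContinuousLinearMap.integral_comp_comm traceCLM hint2).symm
    change trace (∫ g, (ρ g : Matrix m m ℝ) * (Q * A * Q) * ((ρ g : Matrix m m ℝ))ᵀ ∂μ)
      = ∫ g, trace ((ρ g : Matrix m m ℝ) * (Q * A * Q) * ((ρ g : Matrix m m ℝ))ᵀ) ∂μ at h4
    rw [h4]
    have h5 : ∀ g : G,
        trace ((ρ g : Matrix m m ℝ) * (Q * A * Q) * ((ρ g : Matrix m m ℝ))ᵀ)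
          = trace (Q * A * Q) := by
      intro g
      rw [trace_mul_cycle, ← mul_assoc, hO, one_mul]
    rw [integral_congr_ae (Filter.Eventually.of_forall h5), integral_const]
    simp
  have hcval : c = (trace Q)⁻¹ * trace (Q * A * Q) := by
    have h6 : trace (Q * A * Q) = c * trace Q := by
      rw [← htrace, hc, trace_smul, smul_eq_mul]
    field_simp [h6]
    linarith [h6]
  -- PCP block
  have hRtP : ∀ g : G, ((ρ g : Matrix m m ℝ))ᵀ * P = P := by
    intro g; rw [hRt]; exact hRP g⁻¹
  have hPCP : P * C * P = P * A * P := by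
    rw [hconj P P]
    have h7 : ∀ g : G,
        P * ((ρ g : Matrix m m ℝ) * A * ((ρ g : Matrix m m ℝ))ᵀ) * P = P * A * P := by
      intro g
      calc P * ((ρ g : Matrix m m ℝ) * A * ((ρ g : Matrix m m ℝ))ᵀ) * P
          = (P * (ρ g : Matrix m m ℝ)) * A * (((ρ g : Matrix m m ℝ))ᵀ * P) := by noncomm_ring
        _ = P * A * P := by rw [hPR, hRtP]
    rw [integral_congr_ae (Filter.Eventually.of_forall h7), integral_const]
    simp
  -- assemble
  have hsplit : C = P * C * P + P * (C * Q) + Q * (C * P) + Q * C * Q := by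
    have h8 : C = (P + Q) * C * (P + Q) := by rw [hPQ1, one_mul, mul_one]
    conv_lhs => rw [h8]
    noncomm_ring
  have hCfin : C = P * A * P + ((trace Q)⁻¹ * trace (Q * A * Q)) • Q := by
    rw [hsplit, hPCQ, hQCP, hPCP, hc, hcval]
    abel
  rw [hCfin, add_comm]

end Stmt6Aux


lemma kron_block {k n : ℕ} (ψ : Fin k × Fin n → ℝ) (M M' : Matrix (Fin n) (Fin n) ℝ)
    (i i' : Fin k) (a a' : Fin n) :
    (((1 : Matrix (Fin k) (Fin k) ℝ) ⊗ₖ M) * vecMulVec ψ ψ *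
      ((1 : Matrix (Fin k) (Fin k) ℝ) ⊗ₖ M')) (i, a) (i', a')
      = (M * (Matrix.of fun b b' => ψ (i, b) * ψ (i', b')) * M') a a' := by
  simp only [mul_apply, kroneckerMap_apply, vecMulVec_apply, Fintype.sum_prod_type,
    one_apply, ite_mul, mul_ite, one_mul, zero_mul, mul_zero, Finset.sum_ite_eq,
    Finset.mem_univ, if_true, Matrix.of_apply, Finset.sum_ite_eq']
  simp only [Finset.sum_ite_irrel, Finset.sum_const_zero, Finset.sum_ite_eq',
    Finset.mem_univ, if_true]
  refine Finset.sum_congr rfl fun b' _ => ?_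
  congr 1
  simp

/-- Partial trace over the second factor of a matrix indexed by `Fin k × Fin n`. -/
def ptrace2 {k n : ℕ} (M : Matrix (Fin k × Fin n) (Fin k × Fin n) ℝ) :
    Matrix (Fin k) (Fin k) ℝ :=
  Matrix.of fun i i' => ∑ j : Fin n, M (i, j) (i', j)

/-- Abstract content of the paper's Lemma `LemI`: Haar-averaged one-sided conjugation of the
rank-one operator `ψψᵀ` of a bipartite vector, for a representation fixing `e₀` and acting
with trivial commutant on `W = e₀^⊥`. -/
theorem stmt6 {G : Type*} [Group G] [TopologicalSpace G] [IsTopologicalGroup G]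
    [CompactSpace G] [MeasurableSpace G] [BorelSpace G]
    (μ : Measure G) [μ.IsHaarMeasure] [IsProbabilityMeasure μ]
    (n : ℕ) (hn : 1 ≤ n)
    (ρ : G →* Matrix.orthogonalGroup (Fin (n + 1)) ℝ)
    (hρ : Continuous fun g => (ρ g : Matrix (Fin (n + 1)) (Fin (n + 1)) ℝ))
    (e₀ : Fin (n + 1) → ℝ) (he₀ : e₀ = fun i => if i = 0 then 1 else 0)
    (hfix : ∀ g : G, (ρ g : Matrix (Fin (n + 1)) (Fin (n + 1)) ℝ) *ᵥ e₀ = e₀)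
    (Q : Matrix (Fin (n + 1)) (Fin (n + 1)) ℝ) (hQ : Q = 1 - vecMulVec e₀ e₀)
    (hW : ∀ A : Matrix (Fin (n + 1)) (Fin (n + 1)) ℝ, A = Q * A * Q →
      (∀ g : G, A * (ρ g : Matrix (Fin (n + 1)) (Fin (n + 1)) ℝ)
        = (ρ g : Matrix (Fin (n + 1)) (Fin (n + 1)) ℝ) * A) →
      ∃ c : ℝ, A = c • Q)
    (hinv : ∀ x : Fin (n + 1) → ℝ,
      (∀ g : G, (ρ g : Matrix (Fin (n + 1)) (Fin (n + 1)) ℝ) *ᵥ x = x) →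
      ∃ c : ℝ, x = c • e₀)
    (k : ℕ) (hk : 1 ≤ k) (ψ : Fin k × Fin (n + 1) → ℝ) :
    ∫ g, ((1 : Matrix (Fin k) (Fin k) ℝ) ⊗ₖ (ρ g : Matrix (Fin (n + 1)) (Fin (n + 1)) ℝ))
          * vecMulVec ψ ψ *
          ((1 : Matrix (Fin k) (Fin k) ℝ) ⊗ₖ (ρ g : Matrix (Fin (n + 1)) (Fin (n + 1)) ℝ))ᵀ ∂μ
      = (ptrace2 (((1 : Matrix (Fin k) (Fin k) ℝ) ⊗ₖ Q) * vecMulVec ψ ψ *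
            ((1 : Matrix (Fin k) (Fin k) ℝ) ⊗ₖ Q))) ⊗ₖ ((n : ℝ)⁻¹ • Q)
        + (ptrace2 (((1 : Matrix (Fin k) (Fin k) ℝ) ⊗ₖ vecMulVec e₀ e₀) * vecMulVec ψ ψ *
            ((1 : Matrix (Fin k) (Fin k) ℝ) ⊗ₖ vecMulVec e₀ e₀))) ⊗ₖ vecMulVec e₀ e₀ := by
  classical
  have he : e₀ ⬝ᵥ e₀ = 1 := by subst he₀; simp [dotProduct]
  have hn0 : (n : ℝ) ≠ 0 := by
    exact_mod_cast Nat.one_le_iff_ne_zero.mp hn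
  have htQ : trace Q = (n : ℝ) := by
    rw [hQ, trace_sub, trace_one, Stmt6Aux.trace_vecMulVec, he]
    simp [Fintype.card_fin]
  have htQ0 : trace Q ≠ 0 := by rw [htQ]; exact hn0
  set B : Fin k → Fin k → Matrix (Fin (n + 1)) (Fin (n + 1)) ℝ :=
    fun i i' => Matrix.of fun b b' => ψ (i, b) * ψ (i', b') with hB
  have hkc : Continuous fun g : G =>
      ((1 : Matrix (Fin k) (Fin k) ℝ) ⊗ₖ (ρ g : Matrix (Fin (n + 1)) (Fin (n + 1)) ℝ)) := by
    apply continuous_matrix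
    rintro ⟨i, a⟩ ⟨j, b⟩
    exact continuous_const.mul (hρ.matrix_elem a b)
  have hFc : Continuous fun g : G =>
      ((1 : Matrix (Fin k) (Fin k) ℝ) ⊗ₖ (ρ g : Matrix (Fin (n + 1)) (Fin (n + 1)) ℝ))
        * vecMulVec ψ ψ *
        ((1 : Matrix (Fin k) (Fin k) ℝ) ⊗ₖ (ρ g : Matrix (Fin (n + 1)) (Fin (n + 1)) ℝ))ᵀ :=
    (hkc.matrix_mul continuous_const).matrix_mul hkc.matrix_transpose
  have hFi := Stmt6Aux.integrable_of_continuous μ hFc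
  have hGi : ∀ i i' : Fin k, Integrable (fun g : G =>
      (ρ g : Matrix (Fin (n + 1)) (Fin (n + 1)) ℝ) * B i i' *
        ((ρ g : Matrix (Fin (n + 1)) (Fin (n + 1)) ℝ))ᵀ) μ := fun i i' =>
    Stmt6Aux.integrable_of_continuous μ
      ((hρ.matrix_mul continuous_const).matrix_mul hρ.matrix_transpose)
  ext ⟨i, a⟩ ⟨i', a'⟩
  rw [Stmt6Aux.integral_matrix_apply hFi]
  have hpt : ∀ g : G,
      (((1 : Matrix (Fin k) (Fin k) ℝ) ⊗ₖ (ρ g : Matrix (Fin (n + 1)) (Fin (n + 1)) ℝ))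
        * vecMulVec ψ ψ *
        ((1 : Matrix (Fin k) (Fin k) ℝ) ⊗ₖ (ρ g : Matrix (Fin (n + 1)) (Fin (n + 1)) ℝ))ᵀ)
          (i, a) (i', a')
      = ((ρ g : Matrix (Fin (n + 1)) (Fin (n + 1)) ℝ) * B i i' *
          ((ρ g : Matrix (Fin (n + 1)) (Fin (n + 1)) ℝ))ᵀ) a a' := by
    intro g
    rw [← kroneckerMap_transpose, transpose_one]
    exact kron_block ψ _ _ i i' a a'
  rw [integral_congr_ae (Filter.Eventually.of_forall hpt)]
  rw [← Stmt6Aux.integral_matrix_apply (hGi i i') a a']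
  rw [Stmt6Aux.conj_avg μ ρ hρ e₀ he hfix Q hQ htQ0 hW hinv (B i i')]
  have hpt2 : ptrace2 (((1 : Matrix (Fin k) (Fin k) ℝ) ⊗ₖ Q) * vecMulVec ψ ψ *
      ((1 : Matrix (Fin k) (Fin k) ℝ) ⊗ₖ Q)) i i' = trace (Q * B i i' * Q) := by
    simp only [ptrace2, Matrix.of_apply, trace, diag_apply]
    exact Finset.sum_congr rfl fun j _ => kron_block ψ Q Q i i' j j
  have hpt3 : ptrace2 (((1 : Matrix (Fin k) (Fin k) ℝ) ⊗ₖ vecMulVec e₀ e₀) * vecMulVec ψ ψ *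
      ((1 : Matrix (Fin k) (Fin k) ℝ) ⊗ₖ vecMulVec e₀ e₀)) i i'
      = trace (vecMulVec e₀ e₀ * B i i' * vecMulVec e₀ e₀) := by
    simp only [ptrace2, Matrix.of_apply, trace, diag_apply]
    exact Finset.sum_congr rfl fun j _ => kron_block ψ _ _ i i' j j
  set s : ℝ := ((B i i')ᵀ *ᵥ e₀) ⬝ᵥ e₀ with hsdef
  have h1 : vecMulVec e₀ e₀ * B i i' * vecMulVec e₀ e₀ = s • vecMulVec e₀ e₀ := by
    rw [Stmt6Aux.vecMulVec_mul, Stmt6Aux.vecMulVec_mul_vecMulVec]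
  have htr : trace (vecMulVec e₀ e₀ * B i i' * vecMulVec e₀ e₀) = s := by
    rw [h1, trace_smul, Stmt6Aux.trace_vecMulVec, he, smul_eq_mul, mul_one]
  rw [htr] at hpt3
  rw [h1]
  simp only [Matrix.add_apply, kroneckerMap_apply, Matrix.smul_apply, smul_eq_mul,
    hpt2, hpt3, htQ]
  ring
end

section
/- Let V be a finite-dimensional real inner product space and let C ⊆ V be a closed convex cone that is self-dual, i.e. C = {x ∈ V : ⟨x, y⟩ ≥ 0 for all y ∈ C}. Let u ∈ C and let x ∈ V satisfy ⟨u, x⟩ = 0. Then for every e ∈ V with e ∈ C and u − e ∈ C, one has 2·⟨e, x⟩ ≤ ‖u‖·‖x‖; consequently 2·sup{ |⟨e, x⟩| : e ∈ C, u − e ∈ C } ≤ ‖u‖·‖x‖. -/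
open scoped RealInnerProductSpace

/-- Geometric core of the 1-norm vs 2-norm bound in bit-symmetric state spaces: in a
finite-dimensional real inner product space with a closed, self-dual convex cone `C`,
if `u ∈ C` and `⟪u, x⟫ = 0`, then every effect `e` (i.e. `e ∈ C`, `u - e ∈ C`) satisfies
`2⟪e, x⟫ ≤ ‖u‖‖x‖`, and hence `2 sup |⟪e, x⟫| ≤ ‖u‖‖x‖`. -/
theorem stmt7 {V : Type*} [NormedAddCommGroup V] [InnerProductSpace ℝ V]
    [FiniteDimensional ℝ V]
    (C : ConvexCone ℝ V) (hclosed : IsClosed (C : Set V))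
    (hself : ∀ x : V, x ∈ C ↔ ∀ y ∈ C, 0 ≤ ⟪x, y⟫)
    (u : V) (hu : u ∈ C) (x : V) (hux : ⟪u, x⟫ = 0) :
    (∀ e : V, e ∈ C → u - e ∈ C → 2 * ⟪e, x⟫ ≤ ‖u‖ * ‖x‖) ∧
      2 * sSup {r : ℝ | ∃ e : V, e ∈ C ∧ u - e ∈ C ∧ r = |⟪e, x⟫|} ≤ ‖u‖ * ‖x‖ := by
  have h0 : (0 : V) ∈ C := (hself 0).mpr fun y hy => by simp
  -- Moreau decomposition: project x onto C
  obtain ⟨R, hRmem, hmin⟩ :=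
    exists_norm_eq_iInf_of_complete_convex ⟨0, h0⟩ hclosed.isComplete C.convex x
  have hvar : ∀ w ∈ C, ⟪x - R, w - R⟫ ≤ 0 :=
    (norm_eq_iInf_iff_real_inner_le_zero C.convex hRmem).mp hmin
  set S : V := R - x with hSdef
  have hS : S ∈ C := by
    refine (hself S).mpr fun y hy => ?_
    have h := hvar (R + y) (C.add_mem hRmem hy)
    have h2 : ⟪x - R, y⟫ ≤ 0 := by simpa using h
    have : ⟪S, y⟫ = -⟪x - R, y⟫ := by
      rw [hSdef, ← inner_neg_left]; congr 1; abel
    linarith [this ▸ neg_nonneg.mpr h2]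
  have hRS : ⟪R, S⟫ = 0 := by
    have h1 : ⟪x - R, -R⟫ ≤ 0 := by simpa using hvar 0 h0
    have h2 : ⟪x - R, R⟫ ≤ 0 := by simpa using hvar (R + R) (C.add_mem hRmem hRmem)
    have h3 : ⟪x - R, R⟫ = 0 := by rw [inner_neg_right] at h1; linarith
    have : ⟪R, S⟫ = -⟪x - R, R⟫ := by
      rw [hSdef, real_inner_comm, ← inner_neg_left]; congr 1; abel
    rw [this, h3, neg_zero]
  have hxRS : x = R - S := by rw [hSdef]; abel
  have hnorm : ‖R + S‖ = ‖x‖ := by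
    have hSR : ⟪S, R⟫ = 0 := by rw [real_inner_comm]; exact hRS
    rw [hxRS, norm_sub_eq_norm_add hSR]
  have part1 : ∀ e : V, e ∈ C → u - e ∈ C → 2 * ⟪e, x⟫ ≤ ‖u‖ * ‖x‖ := by
    intro e he heff
    have heS : 0 ≤ ⟪e, S⟫ := by rw [real_inner_comm]; exact (hself S).mp hS e he
    have heR : ⟪u - e, R⟫ ≥ 0 := (hself _).mp heff R hRmem
    have huRS : ⟪u, R⟫ = ⟪u, S⟫ := by
      have : ⟪u, R - S⟫ = 0 := hxRS ▸ hux
      rw [inner_sub_right] at this; linarith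
    have h1 : ⟪e, x⟫ = ⟪e, R⟫ - ⟪e, S⟫ := by rw [hxRS, inner_sub_right]
    have h2 : ⟪e, R⟫ ≤ ⟪u, R⟫ := by rw [inner_sub_left] at heR; linarith
    have h3 : 2 * ⟪u, R⟫ = ⟪u, R + S⟫ := by rw [inner_add_right]; linarith
    have h4 : ⟪u, R + S⟫ ≤ ‖u‖ * ‖R + S‖ := real_inner_le_norm u (R + S)
    rw [hnorm] at h4
    linarith
  refine ⟨part1, ?_⟩
  have habs : ∀ e : V, e ∈ C → u - e ∈ C → |⟪e, x⟫| ≤ ‖u‖ * ‖x‖ / 2 := by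
    intro e he heff
    rw [abs_le]
    constructor
    · have he' : u - (u - e) ∈ C := by simpa using he
      have := part1 (u - e) heff he'
      rw [inner_sub_left, hux] at this
      linarith
    · linarith [part1 e he heff]
  have hne : ({r : ℝ | ∃ e : V, e ∈ C ∧ u - e ∈ C ∧ r = |⟪e, x⟫|}).Nonempty :=
    ⟨|⟪(0 : V), x⟫|, 0, h0, by simpa using hu, rfl⟩
  have hbdd : ∀ r ∈ {r : ℝ | ∃ e : V, e ∈ C ∧ u - e ∈ C ∧ r = |⟪e, x⟫|},
      r ≤ ‖u‖ * ‖x‖ / 2 := by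
    rintro r ⟨e, he, heff, rfl⟩
    exact habs e he heff
  have := csSup_le hne hbdd
  linarith
end

section
/- Let d_C ≥ 1 and d₁, d₂ ≥ 1 with d₁·d₂ ≥ 2, and let p : Fin d_C × (Fin d₁ × Fin d₂) → ℝ be a probability distribution (all values nonnegative and summing to 1). For a permutation π of Fin d₁ × Fin d₂ define σ(π)(c, a₂) := Σ_{a₁} p(c, π⁻¹(a₁, a₂)), and set p_C(c) := Σ_{a₁, a₂} p(c, (a₁, a₂)). Then (1/(d₁d₂)!) · Σ_{π ∈ Sym(Fin d₁ × Fin d₂)} Σ_{c, a₂} ( σ(π)(c, a₂) − p_C(c)/d₂ )² = (d₂ − 1)·( d₁d₂·Σ_{c, a} p(c, a)² − Σ_c p_C(c)² ) / ( d₂·(d₁d₂ − 1) ). -/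
open Finset

lemma count_pair_const {α : Type*} [Fintype α] [DecidableEq α]
    (x y : α) (hxy : x ≠ y) (a a' : α) (haa : a ≠ a') :
    (∑ π : Equiv.Perm α, if (π x, π y) = (a, a') then (1:ℝ) else 0)
      = ∑ π : Equiv.Perm α, if (π x, π y) = (x, y) then (1:ℝ) else 0 := by
  set s : Equiv.Perm α := Equiv.swap x a with hs
  set t : Equiv.Perm α := Equiv.swap (s y) a' with ht
  set τ : Equiv.Perm α := t * s with hτ
  have hsy : s y ≠ a := by
    by_cases h : y = a
    · subst h
      rw [hs, Equiv.swap_apply_right]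
      exact hxy
    · rw [hs, Equiv.swap_apply_of_ne_of_ne (Ne.symm hxy) h]
      exact h
  have hτx : τ x = a := by
    rw [hτ, Equiv.Perm.mul_apply, hs, Equiv.swap_apply_left, ht,
      Equiv.swap_apply_of_ne_of_ne (Ne.symm hsy) haa]
  have hτy : τ y = a' := by
    rw [hτ, Equiv.Perm.mul_apply, ht, Equiv.swap_apply_left]
  refine (Fintype.sum_bijective (fun π => τ * π) (Group.mulLeft_bijective τ) _ _ ?_).symm
  intro π
  simp only [Equiv.Perm.mul_apply, Prod.mk.injEq]
  congr 1
  apply propext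
  constructor
  · rintro ⟨h1, h2⟩
    rw [h1, h2, hτx, hτy]; simp
  · rintro ⟨h1, h2⟩
    exact ⟨τ.injective (h1.trans hτx.symm), τ.injective (h2.trans hτy.symm)⟩

lemma count_single_const {α : Type*} [Fintype α] [DecidableEq α]
    (x a : α) :
    (∑ π : Equiv.Perm α, if π x = a then (1:ℝ) else 0)
      = ∑ π : Equiv.Perm α, if π x = x then (1:ℝ) else 0 := by
  set τ : Equiv.Perm α := Equiv.swap x a with hτ
  have hτx : τ x = a := Equiv.swap_apply_left x a
  refine (Fintype.sum_bijective (fun π => τ * π) (Group.mulLeft_bijective τ) _ _ ?_).symm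
  intro π
  simp only [Equiv.Perm.mul_apply]
  congr 1
  apply propext
  constructor
  · intro h1; rw [h1, hτx]
  · intro h1; exact τ.injective (h1.trans hτx.symm)

lemma sum_perm_single {α : Type*} [Fintype α] [DecidableEq α] (x : α) (f : α → ℝ) :
    ∑ π : Equiv.Perm α, f (π x)
      = ((Fintype.card α).factorial : ℝ) / (Fintype.card α : ℝ) * ∑ a, f a := by
  have hcard : (0:ℝ) < (Fintype.card α : ℝ) := by
    have : 0 < Fintype.card α := Fintype.card_pos_iff.mpr ⟨x⟩
    exact_mod_cast this
  have step1 : ∀ π : Equiv.Perm α, f (π x) = ∑ a, if π x = a then f a else 0 := by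
    intro π
    rw [Finset.sum_ite_eq univ (π x) f]
    simp
  simp_rw [step1]
  rw [Finset.sum_comm]
  have step2 : ∀ a : α, (∑ π : Equiv.Perm α, if π x = a then f a else 0)
      = f a * ∑ π : Equiv.Perm α, if π x = a then (1:ℝ) else 0 := by
    intro a
    rw [Finset.mul_sum]
    exact Finset.sum_congr rfl fun π _ => by split <;> simp
  simp_rw [step2, count_single_const x]
  rw [← Finset.sum_mul]
  set c₀ : ℝ := ∑ π : Equiv.Perm α, if π x = x then (1:ℝ) else 0 with hc₀
  have htot : (Fintype.card α : ℝ) * c₀ = ((Fintype.card α).factorial : ℝ) := by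
    have key : ∑ a : α, (∑ π : Equiv.Perm α, if π x = a then (1:ℝ) else 0)
        = ((Fintype.card α).factorial : ℝ) := by
      rw [Finset.sum_comm]
      have h1 : ∀ π : Equiv.Perm α, (∑ a : α, if π x = a then (1:ℝ) else 0) = 1 := by
        intro π
        rw [Finset.sum_ite_eq univ (π x) (fun _ => (1:ℝ))]
        simp
      simp_rw [h1]
      simp [Fintype.card_perm]
    rw [← key]
    simp_rw [count_single_const x]
    rw [Finset.sum_const, Finset.card_univ, nsmul_eq_mul]
  rw [mul_comm, ← htot]
  field_simp

lemma sum_perm_pair {α : Type*} [Fintype α] [DecidableEq α] (x y : α) (hxy : x ≠ y)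
    (F : α → α → ℝ) :
    ∑ π : Equiv.Perm α, F (π x) (π y)
      = ((Fintype.card α).factorial : ℝ)
          / ((Fintype.card α : ℝ) * ((Fintype.card α : ℝ) - 1))
        * ∑ ab ∈ (univ : Finset α).offDiag, F ab.1 ab.2 := by
  have h2 : 2 ≤ Fintype.card α := Fintype.one_lt_card_iff_nontrivial.mpr ⟨⟨x, y, hxy⟩⟩
  have hne : ((Fintype.card α : ℝ) * ((Fintype.card α : ℝ) - 1)) ≠ 0 := by
    have h2' : (2:ℝ) ≤ (Fintype.card α : ℝ) := by exact_mod_cast h2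
    nlinarith
  have hmem : ∀ π : Equiv.Perm α, (π x, π y) ∈ (univ : Finset α).offDiag := by
    intro π
    simp [Finset.mem_offDiag, hxy]
  have step1 : ∀ π : Equiv.Perm α,
      F (π x) (π y) = ∑ ab ∈ (univ : Finset α).offDiag,
        if (π x, π y) = ab then F ab.1 ab.2 else 0 := by
    intro π
    rw [Finset.sum_ite_eq ((univ : Finset α).offDiag) (π x, π y) (fun ab => F ab.1 ab.2)]
    rw [if_pos (hmem π)]
  simp_rw [step1]
  rw [Finset.sum_comm]
  have step2 : ∀ ab ∈ (univ : Finset α).offDiag,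
      (∑ π : Equiv.Perm α, if (π x, π y) = ab then F ab.1 ab.2 else 0)
      = F ab.1 ab.2 * ∑ π : Equiv.Perm α, if (π x, π y) = (x, y) then (1:ℝ) else 0 := by
    rintro ⟨a, a'⟩ hab
    rw [Finset.mem_offDiag] at hab
    rw [← count_pair_const x y hxy a a' hab.2.2, Finset.mul_sum]
    exact Finset.sum_congr rfl fun π _ => by split <;> simp
  rw [Finset.sum_congr rfl step2, ← Finset.sum_mul]
  set c₀ : ℝ := ∑ π : Equiv.Perm α, if (π x, π y) = (x, y) then (1:ℝ) else 0 with hc₀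
  have htot : ((Fintype.card α : ℝ) * ((Fintype.card α : ℝ) - 1)) * c₀
      = ((Fintype.card α).factorial : ℝ) := by
    have key : ∑ ab ∈ (univ : Finset α).offDiag,
        (∑ π : Equiv.Perm α, if (π x, π y) = ab then (1:ℝ) else 0)
        = ((Fintype.card α).factorial : ℝ) := by
      rw [Finset.sum_comm]
      have h1 : ∀ π : Equiv.Perm α,
          (∑ ab ∈ (univ : Finset α).offDiag, if (π x, π y) = ab then (1:ℝ) else 0) = 1 := by
        intro π
        rw [Finset.sum_ite_eq ((univ : Finset α).offDiag) (π x, π y) (fun _ => (1:ℝ))]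
        rw [if_pos (hmem π)]
      simp_rw [h1]
      simp [Fintype.card_perm]
    have hconst : ∀ ab ∈ (univ : Finset α).offDiag,
        (∑ π : Equiv.Perm α, if (π x, π y) = ab then (1:ℝ) else 0) = c₀ :=
      fun ab hab => count_pair_const x y hxy ab.1 ab.2 (Finset.mem_offDiag.mp hab).2.2
    rw [Finset.sum_congr rfl hconst, Finset.sum_const, nsmul_eq_mul] at key
    rw [← key]
    congr 1
    rw [Finset.offDiag_card, Finset.card_univ]
    have h1 : Fintype.card α ≤ Fintype.card α * Fintype.card α :=
      Nat.le_mul_of_pos_left _ (by omega)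
    push_cast [Nat.cast_sub h1]
    ring
  rw [mul_comm, ← htot]
  have hc1 : (Fintype.card α : ℝ) - 1 ≠ 0 := by intro h; apply hne; rw [h, mul_zero]
  field_simp

lemma sum_offDiag_mul {α : Type*} [Fintype α] [DecidableEq α] (f : α → ℝ) :
    ∑ ab ∈ (univ : Finset α).offDiag, f ab.1 * f ab.2
      = (∑ a, f a) ^ 2 - ∑ a, f a ^ 2 := by
  have hsub : (univ : Finset α).diag ⊆ univ ×ˢ univ := by
    intro x hx
    rw [Finset.mem_diag] at hx
    exact Finset.mem_product.mpr ⟨hx.1, hx.2 ▸ hx.1⟩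
  rw [← Finset.product_sdiff_diag, Finset.sum_sdiff_eq_sub hsub]
  have hprod : ∑ ab ∈ (univ : Finset α) ×ˢ univ, f ab.1 * f ab.2 = (∑ a, f a) ^ 2 := by
    rw [Finset.sum_product, sq, Finset.sum_mul_sum]
  have hdiag : ∑ ab ∈ (univ : Finset α).diag, f ab.1 * f ab.2 = ∑ a, f a ^ 2 := by
    rw [Finset.sum_diag]
    exact Finset.sum_congr rfl fun a _ => (sq (f a)).symm
  rw [hprod, hdiag]

lemma sum_ite_double (m : ℕ) (X Y : ℝ) :
    ∑ a : Fin m, ∑ b : Fin m, (if a = b then X else Y)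
      = (m:ℝ) * X + ((m:ℝ) * (m:ℝ) - (m:ℝ)) * Y := by
  have h1 : ∀ a : Fin m, ∑ b : Fin m, (if a = b then X else Y)
      = X + ((m:ℝ) - 1) * Y := by
    intro a
    have h2 : ∀ b : Fin m, (if a = b then X else Y)
        = (if a = b then X - Y else 0) + Y := by intro b; split <;> ring
    simp_rw [h2]
    rw [Finset.sum_add_distrib, Finset.sum_ite_eq univ a (fun _ => X - Y),
      if_pos (Finset.mem_univ a), Finset.sum_const, Finset.card_univ]
    simp
    ring
  simp_rw [h1]
  rw [Finset.sum_const, Finset.card_univ]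
  simp
  ring

/-- The classical-probability instance of the paper's decoupling Corollary in 2-norm:
averaging over all permutation dynamics of `A = A₁A₂`, the mean squared Euclidean distance
between the joint marginal on `C × A₂` and the decoupled distribution `p_C ⊗ uniform`. -/
theorem stmt11 (dC d₁ d₂ : ℕ) (hdC : 1 ≤ dC) (hd₁ : 1 ≤ d₁) (hd₂ : 1 ≤ d₂)
    (hd : 2 ≤ d₁ * d₂)
    (p : Fin dC × (Fin d₁ × Fin d₂) → ℝ)
    (hpos : ∀ x, 0 ≤ p x) (hsum : ∑ x, p x = 1) :
    (((d₁ * d₂).factorial : ℝ))⁻¹ *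
        ∑ π : Equiv.Perm (Fin d₁ × Fin d₂), ∑ c : Fin dC, ∑ a₂ : Fin d₂,
          ((∑ a₁ : Fin d₁, p (c, π⁻¹ (a₁, a₂)))
            - (∑ a : Fin d₁ × Fin d₂, p (c, a)) / (d₂ : ℝ)) ^ 2
      = ((d₂ : ℝ) - 1) *
          ((d₁ * d₂ : ℝ) * (∑ c : Fin dC, ∑ a : Fin d₁ × Fin d₂, p (c, a) ^ 2)
            - ∑ c : Fin dC, (∑ a : Fin d₁ × Fin d₂, p (c, a)) ^ 2)
        / ((d₂ : ℝ) * ((d₁ * d₂ : ℝ) - 1)) := by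
  classical
  have hcard : Fintype.card (Fin d₁ × Fin d₂) = d₁ * d₂ := by simp
  have hNne : (((d₁ * d₂).factorial : ℝ)) ≠ 0 := by
    exact_mod_cast (Nat.factorial_pos _).ne'
  have hd₂ne : ((d₂ : ℝ)) ≠ 0 := by positivity
  have hnR : (2:ℝ) ≤ ((d₁ * d₂ : ℕ) : ℝ) := by exact_mod_cast hd
  have hnne : (((d₁ * d₂ : ℕ) : ℝ)) ≠ 0 := by positivity
  have hn1ne : (((d₁ * d₂ : ℕ) : ℝ)) - 1 ≠ 0 := by nlinarith
  -- Step 1: replace π⁻¹ by π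
  have h0 : (∑ π : Equiv.Perm (Fin d₁ × Fin d₂), ∑ c : Fin dC, ∑ a₂ : Fin d₂,
          ((∑ a₁ : Fin d₁, p (c, π⁻¹ (a₁, a₂)))
            - (∑ a : Fin d₁ × Fin d₂, p (c, a)) / (d₂ : ℝ)) ^ 2)
      = ∑ π : Equiv.Perm (Fin d₁ × Fin d₂), ∑ c : Fin dC, ∑ a₂ : Fin d₂,
          ((∑ a₁ : Fin d₁, p (c, π (a₁, a₂)))
            - (∑ a : Fin d₁ × Fin d₂, p (c, a)) / (d₂ : ℝ)) ^ 2 :=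
    Fintype.sum_equiv (Equiv.inv _) _ _ (fun π => rfl)
  -- Step 2: bring the π-sum innermost
  have swap : (∑ π : Equiv.Perm (Fin d₁ × Fin d₂), ∑ c : Fin dC, ∑ a₂ : Fin d₂,
          ((∑ a₁ : Fin d₁, p (c, π (a₁, a₂)))
            - (∑ a : Fin d₁ × Fin d₂, p (c, a)) / (d₂ : ℝ)) ^ 2)
      = ∑ c : Fin dC, ∑ a₂ : Fin d₂, ∑ π : Equiv.Perm (Fin d₁ × Fin d₂),
          ((∑ a₁ : Fin d₁, p (c, π (a₁, a₂)))
            - (∑ a : Fin d₁ × Fin d₂, p (c, a)) / (d₂ : ℝ)) ^ 2 := by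
    rw [Finset.sum_comm]
    exact Finset.sum_congr rfl fun c _ => Finset.sum_comm
  -- Step 3: key computation for fixed (c, a₂)
  have key : ∀ (c : Fin dC) (a₂ : Fin d₂),
      (∑ π : Equiv.Perm (Fin d₁ × Fin d₂),
          ((∑ a₁ : Fin d₁, p (c, π (a₁, a₂)))
            - (∑ a : Fin d₁ × Fin d₂, p (c, a)) / (d₂ : ℝ)) ^ 2)
      = ((d₁ * d₂).factorial : ℝ) * (((d₂:ℝ) - 1) *
            (((d₁ * d₂ : ℕ) : ℝ) * (∑ a : Fin d₁ × Fin d₂, p (c, a) ^ 2)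
              - (∑ a : Fin d₁ × Fin d₂, p (c, a)) ^ 2)
          / ((d₂:ℝ) ^ 2 * (((d₁ * d₂ : ℕ) : ℝ) - 1))) := by
    intro c a₂
    have hA : (∑ π : Equiv.Perm (Fin d₁ × Fin d₂), ∑ a₁ : Fin d₁, p (c, π (a₁, a₂)))
        = (d₁:ℝ) * (((d₁ * d₂).factorial : ℝ) / ((d₁ * d₂ : ℕ) : ℝ)
            * ∑ a : Fin d₁ × Fin d₂, p (c, a)) := by
      rw [Finset.sum_comm]
      have e : ∀ a₁ : Fin d₁, (∑ π : Equiv.Perm (Fin d₁ × Fin d₂), p (c, π (a₁, a₂)))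
          = ((d₁ * d₂).factorial : ℝ) / ((d₁ * d₂ : ℕ) : ℝ)
            * ∑ a : Fin d₁ × Fin d₂, p (c, a) := by
        intro a₁
        have h := sum_perm_single (α := Fin d₁ × Fin d₂) (a₁, a₂) (fun a => p (c, a))
        rw [hcard] at h
        exact h
      rw [Finset.sum_congr rfl fun a₁ _ => e a₁, Finset.sum_const, Finset.card_univ,
        Fintype.card_fin, nsmul_eq_mul]
    have hB : (∑ π : Equiv.Perm (Fin d₁ × Fin d₂),
          (∑ a₁ : Fin d₁, p (c, π (a₁, a₂))) ^ 2)
        = (d₁:ℝ) * (((d₁ * d₂).factorial : ℝ) / ((d₁ * d₂ : ℕ) : ℝ)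
              * ∑ a : Fin d₁ × Fin d₂, p (c, a) ^ 2)
          + ((d₁:ℝ) * (d₁:ℝ) - (d₁:ℝ)) *
            (((d₁ * d₂).factorial : ℝ)
                / (((d₁ * d₂ : ℕ) : ℝ) * (((d₁ * d₂ : ℕ) : ℝ) - 1))
              * ((∑ a : Fin d₁ × Fin d₂, p (c, a)) ^ 2
                  - ∑ a : Fin d₁ × Fin d₂, p (c, a) ^ 2)) := by
      have hsq : ∀ π : Equiv.Perm (Fin d₁ × Fin d₂),
          (∑ a₁ : Fin d₁, p (c, π (a₁, a₂))) ^ 2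
          = ∑ a₁ : Fin d₁, ∑ b₁ : Fin d₁, p (c, π (a₁, a₂)) * p (c, π (b₁, a₂)) := by
        intro π
        rw [sq, Finset.sum_mul_sum]
      simp_rw [hsq]
      rw [Finset.sum_comm]
      rw [Finset.sum_congr rfl fun (a₁ : Fin d₁) _ => Finset.sum_comm]
      have per : ∀ a₁ b₁ : Fin d₁,
          (∑ π : Equiv.Perm (Fin d₁ × Fin d₂), p (c, π (a₁, a₂)) * p (c, π (b₁, a₂)))
          = if a₁ = b₁ then
              ((d₁ * d₂).factorial : ℝ) / ((d₁ * d₂ : ℕ) : ℝ)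
                * ∑ a : Fin d₁ × Fin d₂, p (c, a) ^ 2
            else
              ((d₁ * d₂).factorial : ℝ)
                  / (((d₁ * d₂ : ℕ) : ℝ) * (((d₁ * d₂ : ℕ) : ℝ) - 1))
                * ((∑ a : Fin d₁ × Fin d₂, p (c, a)) ^ 2
                    - ∑ a : Fin d₁ × Fin d₂, p (c, a) ^ 2) := by
        intro a₁ b₁
        by_cases h : a₁ = b₁
        · subst h
          rw [if_pos rfl]
          have h1 := sum_perm_single (α := Fin d₁ × Fin d₂) (a₁, a₂)
            (fun a => p (c, a) ^ 2)
          rw [hcard] at h1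
          simpa only [pow_two] using h1
        · rw [if_neg h]
          have hxy : ((a₁, a₂) : Fin d₁ × Fin d₂) ≠ (b₁, a₂) := by
            simp [Prod.ext_iff, h]
          have h1 := sum_perm_pair (α := Fin d₁ × Fin d₂) (a₁, a₂) (b₁, a₂) hxy
            (fun a b => p (c, a) * p (c, b))
          rw [hcard, sum_offDiag_mul (fun a => p (c, a))] at h1
          exact h1
      simp_rw [per]
      exact sum_ite_double d₁ _ _
    calc (∑ π : Equiv.Perm (Fin d₁ × Fin d₂),
            ((∑ a₁ : Fin d₁, p (c, π (a₁, a₂)))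
              - (∑ a : Fin d₁ × Fin d₂, p (c, a)) / (d₂ : ℝ)) ^ 2)
        = ∑ π : Equiv.Perm (Fin d₁ × Fin d₂),
            ((∑ a₁ : Fin d₁, p (c, π (a₁, a₂))) ^ 2
              - (2 * ((∑ a : Fin d₁ × Fin d₂, p (c, a)) / (d₂ : ℝ)))
                  * (∑ a₁ : Fin d₁, p (c, π (a₁, a₂)))
              + ((∑ a : Fin d₁ × Fin d₂, p (c, a)) / (d₂ : ℝ)) ^ 2) :=
          Finset.sum_congr rfl fun π _ => by ring
      _ = (∑ π : Equiv.Perm (Fin d₁ × Fin d₂),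
            (∑ a₁ : Fin d₁, p (c, π (a₁, a₂))) ^ 2)
          - (2 * ((∑ a : Fin d₁ × Fin d₂, p (c, a)) / (d₂ : ℝ)))
              * (∑ π : Equiv.Perm (Fin d₁ × Fin d₂), ∑ a₁ : Fin d₁, p (c, π (a₁, a₂)))
          + ((d₁ * d₂).factorial : ℝ)
              * ((∑ a : Fin d₁ × Fin d₂, p (c, a)) / (d₂ : ℝ)) ^ 2 := by
          rw [Finset.sum_add_distrib, Finset.sum_sub_distrib, ← Finset.mul_sum,
            Finset.sum_const, Finset.card_univ, Fintype.card_perm, hcard, nsmul_eq_mul]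
      _ = _ := by
          rw [hA, hB]
          have e1 : ((d₁ * d₂ : ℕ) : ℝ) = (d₁:ℝ) * (d₂:ℝ) := by push_cast; ring
          have hd₁ne : (d₁:ℝ) ≠ 0 := by positivity
          have hm1 : (d₁:ℝ) * (d₂:ℝ) - 1 ≠ 0 := by rw [← e1]; exact hn1ne
          rw [e1]
          field_simp
          ring
  rw [h0, swap]
  rw [Finset.sum_congr rfl fun c _ =>
    Finset.sum_congr rfl fun (a₂ : Fin d₂) _ => key c a₂]
  rw [Finset.sum_congr rfl fun (c : Fin dC) _ =>
    (Finset.sum_const _).trans (nsmul_eq_mul _ _)]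
  rw [Finset.mul_sum]
  simp only [Finset.card_univ, Fintype.card_fin]
  have perc : ∀ c : Fin dC,
      (((d₁ * d₂).factorial : ℝ))⁻¹ *
        ((d₂ : ℝ) * (((d₁ * d₂).factorial : ℝ) * (((d₂:ℝ) - 1) *
            (((d₁ * d₂ : ℕ) : ℝ) * (∑ a : Fin d₁ × Fin d₂, p (c, a) ^ 2)
              - (∑ a : Fin d₁ × Fin d₂, p (c, a)) ^ 2)
          / ((d₂:ℝ) ^ 2 * (((d₁ * d₂ : ℕ) : ℝ) - 1)))))
      = ((d₂:ℝ) - 1) *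
          ((d₁:ℝ) * (d₂:ℝ) * (∑ a : Fin d₁ × Fin d₂, p (c, a) ^ 2)
            - (∑ a : Fin d₁ × Fin d₂, p (c, a)) ^ 2)
        / ((d₂:ℝ) * ((d₁:ℝ) * (d₂:ℝ) - 1)) := by
    intro c
    have e1 : ((d₁ * d₂ : ℕ) : ℝ) = (d₁:ℝ) * (d₂:ℝ) := by push_cast; ring
    have hm1 : (d₁:ℝ) * (d₂:ℝ) - 1 ≠ 0 := by rw [← e1]; exact hn1ne
    rw [e1]
    field_simp
  rw [Finset.sum_congr rfl fun c _ => perc c]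
  rw [← Finset.sum_div, ← Finset.mul_sum, Finset.sum_sub_distrib, ← Finset.mul_sum]
end
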